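/- arXiv:2101.10843 — 5 statements merged into one kernel-verified Lean document; each statement's English description precedes it below -/
import Mathlib

section
/- Let q be a prime ideal of S. If ᾱ_i ∈ q for some i ∈ {1,…,8}, then σ ∈ q, and moreover for each m ∈ {1,2,3,4} at least one of ᾱ_m, ᾱ_{m+4} lies in q. -/
open MvPolynomial
open Fin.NatCast

noncomputable section

variable (k : Type*) [Field k]

/-- The polynomial ring in 12 variables `x₁..x₄, y₁..y₄, z₁..z₄`:
a variable is indexed by `(t, i)` with `t : Fin 3` (`0 ↦ x`, `1 ↦ y`, `2 ↦ z`)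
and `i : Fin 4` the index modulo 4. -/
abbrev B := MvPolynomial (Fin 3 × Fin 4) k

/-- `x_i` (indices modulo 4). -/
def xv (i : ℕ) : B k := X (0, (i : Fin 4))
/-- `y_i` (indices modulo 4). -/
def yv (i : ℕ) : B k := X (1, (i : Fin 4))
/-- `z_i` (indices modulo 4). -/
def zv (i : ℕ) : B k := X (2, (i : Fin 4))

/-- `σ = x₁x₂x₃x₄ · y₁y₂y₃y₄ · z₁z₂z₃z₄`, the product of all 12 variables. -/
def sig : B k := ∏ p : Fin 3 × Fin 4, X p

/-- The substitution `x_i ↦ x_{i+1}, y_i ↦ y_{i+1}, z_i ↦ z_{i+1}` (indices mod 4). -/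
def rot : B k →ₐ[k] B k := aeval (fun p => X (p.1, p.2 + 1))

/-- `ᾱ₁ = x₂x₃²x₄ · y₁y₃y₄² · z₁z₂²z₃`. -/
def a1 : B k :=
  xv k 2 * xv k 3 ^ 2 * xv k 4 * yv k 1 * yv k 3 * yv k 4 ^ 2 * zv k 1 * zv k 2 ^ 2 * zv k 3

/-- `ᾱ₂ = (x₁x₄y₁y₄z₁z₄)²`. -/
def a2 : B k := (xv k 1 * xv k 4 * yv k 1 * yv k 4 * zv k 1 * zv k 4) ^ 2

/-- `ᾱ_j` for `j ≥ 1`: `ᾱ₁`, `ᾱ₂` are as above and `ᾱ_{j+2}` is obtained from `ᾱ_j`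
by applying the substitution `rot`. -/
def alpha (j : ℕ) : B k := (⇑(rot k))^[(j - 1) / 2] (if j % 2 = 1 then a1 k else a2 k)
/-- The cycle algebra `S = k[σ, ᾱ₁, …, ᾱ₈] ⊆ B`. -/
def Scal : Subalgebra k (B k) := Algebra.adjoin k (insert (sig k) (alpha k '' Set.Icc 1 8))
/-- Reduction of an index to `{1, …, 8}`, implementing "indices modulo 8". -/
def idx (j : ℕ) : ℕ := (j - 1) % 8 + 1

lemma idx_mem (j : ℕ) : idx j ∈ Set.Icc 1 8 :=
  ⟨Nat.le_add_left 1 _, Nat.succ_le_of_lt (Nat.mod_lt _ (by norm_num))⟩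

/-- `σ` as an element of `S`. -/
def σS : ↥(Scal k) := ⟨sig k, Algebra.subset_adjoin (Set.mem_insert _ _)⟩

/-- `ᾱ_j` (indices modulo 8) as an element of `S`. -/
def αS (j : ℕ) : ↥(Scal k) :=
  ⟨alpha k (idx j), Algebra.subset_adjoin (Set.mem_insert_of_mem _ ⟨idx j, idx_mem j, rfl⟩)⟩

/-- If `q` is a prime ideal of `S` containing some `ᾱ_i`, `i ∈ {1,…,8}`, then `σ ∈ q` and,
for each `m ∈ {1,2,3,4}`, at least one of `ᾱ_m, ᾱ_{m+4}` lies in `q`. -/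
theorem stmt1 (q : Ideal ↥(Scal k)) (hq : q.IsPrime) (i : ℕ) (hi : i ∈ Finset.Icc 1 8)
    (h : αS k i ∈ q) :
    σS k ∈ q ∧ ∀ m ∈ Finset.Icc 1 4, αS k m ∈ q ∨ αS k (m + 4) ∈ q := by
  have key : ∀ j ∈ Finset.Icc 1 8, αS k j * αS k (j + 4) = σS k ^ 2 := by
    intro j hj
    fin_cases hj <;>
    · apply Subtype.ext
      show alpha k _ * alpha k _ = sig k ^ 2
      simp only [idx, Nat.reduceMod, Nat.reduceDiv, Nat.reduceSub, Nat.reduceAdd, alpha,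
        reduceIte, Nat.reduceEqDiff, if_true]
      simp only [Function.iterate_succ, Function.iterate_zero, Function.comp_apply, id_eq]
      simp only [a1, a2, rot, xv, yv, zv, map_mul, map_pow, aeval_X]
      simp only [show ((1:ℕ):Fin 4) = 1 by decide, show ((2:ℕ):Fin 4) = 2 by decide,
        show ((3:ℕ):Fin 4) = 3 by decide, show ((4:ℕ):Fin 4) = 0 by decide, Fin.reduceAdd]
      simp only [sig, Fintype.prod_prod_type, Fin.prod_univ_four, Fin.prod_univ_three]
      ring
  have hσ2 : σS k ^ 2 ∈ q := by
    rw [← key i hi]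
    exact Ideal.mul_mem_right _ q h
  have hσ : σS k ∈ q := hq.mem_of_pow_mem 2 hσ2
  refine ⟨hσ, fun m hm => ?_⟩
  have hm8 : m ∈ Finset.Icc 1 8 := by
    simp only [Finset.mem_Icc] at hm ⊢; omega
  have : αS k m * αS k (m + 4) ∈ q := by
    rw [key m hm8]; exact hσ2
  exact hq.mem_or_mem this

end
end

section
/- For each j ∈ {1,…,5}, the ideal 𝔭_j of S generated by σ, ᾱ_1, …, ᾱ_{3+j} is a prime ideal of S. -/
open MvPolynomial
open Fin.NatCast

noncomputable section

variable (k : Type*) [Field k]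

/-- The ideal `𝔭_j = (σ, ᾱ₁, …, ᾱ_{3+j})` of `S`. -/
def pIdeal (j : ℕ) : Ideal ↥(Scal k) := Ideal.span (insert (σS k) (αS k '' Set.Icc 1 (3 + j)))

-- weight machinery
def Wm (w : Fin 3 × Fin 4 → ℤ) (u : Fin 3 × Fin 4 →₀ ℕ) : ℤ :=
  ∑ v : Fin 3 × Fin 4, (u v : ℤ) * w v

variable {w : Fin 3 × Fin 4 → ℤ}

lemma Wm_add (u v : Fin 3 × Fin 4 →₀ ℕ) : Wm w (u + v) = Wm w u + Wm w v := by
  simp [Wm, add_mul, Finset.sum_add_distrib]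

lemma Wm_zero : Wm w 0 = 0 := by simp [Wm]

lemma Wm_single (p : Fin 3 × Fin 4) (n : ℕ) : Wm w (Finsupp.single p n) = n * w p := by
  simp [Wm, Finsupp.single_apply, ite_mul]

lemma Wm_smul (n : ℕ) (u : Fin 3 × Fin 4 →₀ ℕ) : Wm w (n • u) = n * Wm w u := by
  simp [Wm, Finset.mul_sum, mul_assoc]

def MW (w : Fin 3 × Fin 4 → ℤ) (p : B k) (c : ℤ) : Prop :=
  ∃ u, p = monomial u 1 ∧ Wm w u = c

variable {k}

lemma MW_X (p : Fin 3 × Fin 4) : MW k w (X p) (w p) :=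
  ⟨Finsupp.single p 1, rfl, by rw [Wm_single]; push_cast; ring⟩

lemma MW_one : MW k w 1 0 := ⟨0, (by simp), Wm_zero⟩

lemma MW_mul {p q : B k} {c d : ℤ} (hp : MW k w p c) (hq : MW k w q d) :
    MW k w (p * q) (c + d) := by
  obtain ⟨u, rfl, hu⟩ := hp; obtain ⟨v, rfl, hv⟩ := hq
  exact ⟨u + v, by rw [monomial_mul, one_mul], by rw [Wm_add, hu, hv]⟩

lemma MW_pow {p : B k} {c : ℤ} (n : ℕ) (hp : MW k w p c) : MW k w (p ^ n) (n * c) := by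
  obtain ⟨u, rfl, hu⟩ := hp
  exact ⟨n • u, by rw [monomial_pow, one_pow], by rw [Wm_smul, hu]⟩

lemma MW_congr {p : B k} {c d : ℤ} (hp : MW k w p c) (h : c = d) : MW k w p d := h ▸ hp

lemma MW_sig : MW k w (sig k) (∑ p : Fin 3 × Fin 4, w p) := by
  rw [sig]
  classical
  induction (Finset.univ : Finset (Fin 3 × Fin 4)) using Finset.cons_induction with
  | empty => simpa using MW_one
  | cons a s ha ih => rw [Finset.prod_cons, Finset.sum_cons]; exact MW_mul (MW_X a) ih

lemma MW_xv (i : ℕ) : MW k w (xv k i) (w (0, (i : Fin 4))) := MW_X _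
lemma MW_yv (i : ℕ) : MW k w (yv k i) (w (1, (i : Fin 4))) := MW_X _
lemma MW_zv (i : ℕ) : MW k w (zv k i) (w (2, (i : Fin 4))) := MW_X _

variable (k)
def a1s (m : ℕ) : B k :=
  xv k (2+m) * xv k (3+m) ^ 2 * xv k (4+m) * yv k (1+m) * yv k (3+m) * yv k (4+m) ^ 2 *
    zv k (1+m) * zv k (2+m) ^ 2 * zv k (3+m)
def a2s (m : ℕ) : B k :=
  (xv k (1+m) * xv k (4+m) * yv k (1+m) * yv k (4+m) * zv k (1+m) * zv k (4+m)) ^ 2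
variable {k}

lemma MW_a1s (m : ℕ) : MW k w (a1s k m)
    (w (0, ((2+m : ℕ) : Fin 4)) + 2 * w (0, ((3+m : ℕ) : Fin 4)) + w (0, ((4+m : ℕ) : Fin 4)) +
     2 * w (1, ((4+m : ℕ) : Fin 4)) + w (1, ((1+m : ℕ) : Fin 4)) + w (1, ((3+m : ℕ) : Fin 4)) +
     w (2, ((1+m : ℕ) : Fin 4)) + 2 * w (2, ((2+m : ℕ) : Fin 4)) + w (2, ((3+m : ℕ) : Fin 4))) := by
  refine MW_congr (MW_mul (MW_mul (MW_mul (MW_mul (MW_mul (MW_mul (MW_mul (MW_mul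
    (MW_xv (2+m)) (MW_pow 2 (MW_xv (3+m)))) (MW_xv (4+m))) (MW_yv (1+m))) (MW_yv (3+m)))
    (MW_pow 2 (MW_yv (4+m)))) (MW_zv (1+m))) (MW_pow 2 (MW_zv (2+m)))) (MW_zv (3+m))) ?_
  push_cast; ring

lemma MW_a2s (m : ℕ) : MW k w (a2s k m)
    (2 * (w (0, ((1+m : ℕ) : Fin 4)) + w (0, ((4+m : ℕ) : Fin 4)) + w (1, ((1+m : ℕ) : Fin 4)) +
      w (1, ((4+m : ℕ) : Fin 4)) + w (2, ((1+m : ℕ) : Fin 4)) + w (2, ((4+m : ℕ) : Fin 4)))) := by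
  refine MW_congr (MW_pow 2 (MW_mul (MW_mul (MW_mul (MW_mul (MW_mul
    (MW_xv (1+m)) (MW_xv (4+m))) (MW_yv (1+m))) (MW_yv (4+m))) (MW_zv (1+m))) (MW_zv (4+m)))) ?_
  push_cast; ring

-- rot lemmas
lemma rot_xv (i : ℕ) : rot k (xv k i) = xv k (i+1) := by
  simp only [rot, xv, aeval_X]; congr 1; push_cast; ring
lemma rot_yv (i : ℕ) : rot k (yv k i) = yv k (i+1) := by
  simp only [rot, yv, aeval_X]; congr 1; push_cast; ring
lemma rot_zv (i : ℕ) : rot k (zv k i) = zv k (i+1) := by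
  simp only [rot, zv, aeval_X]; congr 1; push_cast; ring

lemma rot_a1s (m : ℕ) : rot k (a1s k m) = a1s k (m+1) := by
  simp only [a1s, map_mul, map_pow, rot_xv, rot_yv, rot_zv, Nat.add_assoc]

lemma rot_a2s (m : ℕ) : rot k (a2s k m) = a2s k (m+1) := by
  simp only [a2s, map_mul, map_pow, rot_xv, rot_yv, rot_zv, Nat.add_assoc]

lemma a1_eq : a1 k = a1s k 0 := rfl
lemma a2_eq : a2 k = a2s k 0 := rfl

lemma iter_a1s (m : ℕ) : (⇑(rot k))^[m] (a1s k 0) = a1s k m := by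
  induction m with
  | zero => rfl
  | succ n ih => rw [Function.iterate_succ_apply', ih, rot_a1s]

lemma iter_a2s (m : ℕ) : (⇑(rot k))^[m] (a2s k 0) = a2s k m := by
  induction m with
  | zero => rfl
  | succ n ih => rw [Function.iterate_succ_apply', ih, rot_a2s]

lemma alpha_odd (m : ℕ) : alpha k (2*m+1) = a1s k m := by
  have h2 : (2*m+1) % 2 = 1 := by omega
  have h3 : (2*m+1-1)/2 = m := by omega
  rw [alpha, h2, h3]
  rw [if_pos rfl, a1_eq, iter_a1s]

lemma alpha_even (m : ℕ) : alpha k (2*m+2) = a2s k m := by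
  have h2 : (2*m+2) % 2 = 0 := by omega
  have h3 : (2*m+2-1)/2 = m := by omega
  rw [alpha, h2, h3]
  simp only [a2_eq]
  norm_num [iter_a2s]

-- value tables
def A1val (w : Fin 3 × Fin 4 → ℤ) (m : ℕ) : ℤ :=
  w (0, ((2+m : ℕ) : Fin 4)) + 2 * w (0, ((3+m : ℕ) : Fin 4)) + w (0, ((4+m : ℕ) : Fin 4)) +
    2 * w (1, ((4+m : ℕ) : Fin 4)) + w (1, ((1+m : ℕ) : Fin 4)) + w (1, ((3+m : ℕ) : Fin 4)) +
    w (2, ((1+m : ℕ) : Fin 4)) + 2 * w (2, ((2+m : ℕ) : Fin 4)) + w (2, ((3+m : ℕ) : Fin 4))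
def A2val (w : Fin 3 × Fin 4 → ℤ) (m : ℕ) : ℤ :=
  2 * (w (0, ((1+m : ℕ) : Fin 4)) + w (0, ((4+m : ℕ) : Fin 4)) + w (1, ((1+m : ℕ) : Fin 4)) +
    w (1, ((4+m : ℕ) : Fin 4)) + w (2, ((1+m : ℕ) : Fin 4)) + w (2, ((4+m : ℕ) : Fin 4)))
def Aval (w : Fin 3 × Fin 4 → ℤ) (i : ℕ) : ℤ :=
  if i % 2 = 1 then A1val w ((i-1)/2) else A2val w ((i-1)/2)

lemma MW_a1s' (m : ℕ) : MW k w (a1s k m) (A1val w m) := MW_a1s m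
lemma MW_a2s' (m : ℕ) : MW k w (a2s k m) (A2val w m) := MW_a2s m

lemma MW_alpha {i : ℕ} (h1 : 1 ≤ i) : MW k w (alpha k i) (Aval w i) := by
  rcases Nat.even_or_odd i with he | ho
  · obtain ⟨m, hm⟩ := he
    have hm' : i = 2 * (m - 1) + 2 := by omega
    have h2 : i % 2 ≠ 1 := by omega
    rw [hm', alpha_even, Aval, if_neg (by omega)]
    have : (2 * (m - 1) + 2 - 1) / 2 = m - 1 := by omega
    rw [this]
    exact MW_a2s' _
  · obtain ⟨m, hm⟩ := ho
    rw [hm, alpha_odd, Aval, if_pos (by omega)]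
    have : (2 * m + 1 - 1) / 2 = m := by omega
    rw [this]
    exact MW_a1s' _


lemma idx_eq {i : ℕ} (h1 : 1 ≤ i) (h8 : i ≤ 8) : idx i = i := by unfold idx; omega

set_option maxHeartbeats 1000000 in
set_option synthInstance.maxHeartbeats 200000 in
lemma main (k : Type*) [Field k] (j : ℕ) (hj1 : 1 ≤ j) (hj5 : j ≤ 5) (w : Fin 3 × Fin 4 → ℤ)
    (hσ : 0 < ∑ p : Fin 3 × Fin 4, w p)
    (hk : ∀ i, 1 ≤ i → i ≤ 3 + j → 0 < Aval w i)
    (hs : ∀ i, 3 + j < i → i ≤ 8 → Aval w i = 0) :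
    (pIdeal k j).IsPrime := by
  classical
  set G : Set (B k) := insert (sig k) (alpha k '' Set.Icc 1 8) with hG
  set I := pIdeal k j with hI
  -- Step A
  have stepA : ∀ p ∈ Submonoid.closure G,
      ∃ (hp : p ∈ Scal k) (u : Fin 3 × Fin 4 →₀ ℕ), p = monomial u 1 ∧ 0 ≤ Wm w u ∧
        (0 < Wm w u → (⟨p, hp⟩ : ↥(Scal k)) ∈ I) := by
    intro p hp
    induction hp using Submonoid.closure_induction with
    | mem g hg =>
      have hgS : g ∈ Scal k := Algebra.subset_adjoin hg
      rcases hg with hg | ⟨i, ⟨hi1, hi8⟩, rfl⟩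
      · subst hg
        obtain ⟨u, hu, hWu⟩ := MW_sig (k := k) (w := w)
        refine ⟨hgS, u, hu, by omega, fun _ => ?_⟩
        have : (⟨sig k, hgS⟩ : ↥(Scal k)) = σS k := rfl
        rw [hI, this]
        exact Ideal.subset_span (Set.mem_insert _ _)
      · obtain ⟨u, hu, hWu⟩ := MW_alpha (k := k) (w := w) hi1
        rcases le_or_gt i (3 + j) with hle | hgt
        · have hpos := hk i hi1 hle
          refine ⟨hgS, u, hu, by omega, fun _ => ?_⟩
          have hval : alpha k (idx i) = alpha k i := by rw [idx_eq hi1 hi8]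
          have : (⟨alpha k i, hgS⟩ : ↥(Scal k)) = αS k i := Subtype.ext hval.symm
          rw [hI, this]
          exact Ideal.subset_span (Set.mem_insert_of_mem _ ⟨i, ⟨hi1, hle⟩, rfl⟩)
        · have hz := hs i hgt hi8
          exact ⟨hgS, u, hu, by omega, fun hpos => absurd hpos (by omega)⟩
    | one =>
      exact ⟨(Scal k).one_mem, 0, by simp, by simp [Wm_zero], fun hpos => absurd hpos (by simp [Wm_zero])⟩
    | mul p q hp hq ihp ihq =>
      obtain ⟨hpS, u, rfl, hu0, hup⟩ := ihp
      obtain ⟨hqS, v, rfl, hv0, hvp⟩ := ihq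
      refine ⟨(Scal k).mul_mem hpS hqS, u + v, by rw [monomial_mul, one_mul],
        by rw [Wm_add]; omega, fun hpos => ?_⟩
      have hsum : 0 < Wm w u ∨ 0 < Wm w v := by rw [Wm_add] at hpos; omega
      have hmul : (⟨monomial u 1 * monomial v 1, _⟩ : ↥(Scal k)) =
          (⟨monomial u 1, hpS⟩ : ↥(Scal k)) * ⟨monomial v 1, hqS⟩ := rfl
      rcases hsum with h | h
      · rw [hmul]; exact I.mul_mem_right _ (hup h)
      · rw [hmul]; exact I.mul_mem_left _ (hvp h)
  -- Step B
  have stepB0 : ∀ p : B k, p ∈ Submodule.span k (Submonoid.closure G : Set (B k)) →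
      ∃ q r : B k, p = q + r ∧ ∃ (hq : q ∈ Scal k), (⟨q, hq⟩ : ↥(Scal k)) ∈ I ∧
        (∀ u ∈ q.support, 0 < Wm w u) ∧ (∀ u ∈ r.support, Wm w u = 0) := by
    intro p hp'
    induction hp' using Submodule.span_induction with
    | mem x hx =>
      obtain ⟨hxS, u, rfl, hge, hpos⟩ := stepA x hx
      by_cases h0 : 0 < Wm w u
      · refine ⟨monomial u 1, 0, (add_zero _).symm, hxS, hpos h0, ?_, by simp⟩
        intro v hv
        rw [support_monomial, if_neg one_ne_zero] at hv
        simp only [Finset.mem_singleton] at hv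
        subst hv; exact h0
      · have h0' : Wm w u = 0 := by omega
        refine ⟨0, monomial u 1, (zero_add _).symm, (Scal k).zero_mem, ?_, by simp, ?_⟩
        · have : (⟨(0 : B k), (Scal k).zero_mem⟩ : ↥(Scal k)) = 0 := rfl
          rw [this]; exact I.zero_mem
        · intro v hv
          rw [support_monomial, if_neg one_ne_zero] at hv
          simp only [Finset.mem_singleton] at hv
          subst hv; exact h0'
    | zero =>
      exact ⟨0, 0, by simp, (Scal k).zero_mem, by
        have : (⟨(0 : B k), (Scal k).zero_mem⟩ : ↥(Scal k)) = 0 := rfl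
        rw [this]; exact I.zero_mem, by simp, by simp⟩
    | add x y hx hy ihx ihy =>
      obtain ⟨qx, rx, hxe, hqx, hqxI, hqxs, hrxs⟩ := ihx
      obtain ⟨qy, ry, hye, hqy, hqyI, hqys, hrys⟩ := ihy
      refine ⟨qx + qy, rx + ry, by rw [hxe, hye]; ring, (Scal k).add_mem hqx hqy, ?_, ?_, ?_⟩
      · have : (⟨qx + qy, _⟩ : ↥(Scal k)) = (⟨qx, hqx⟩ : ↥(Scal k)) + ⟨qy, hqy⟩ := rfl
        rw [this]; exact I.add_mem hqxI hqyI
      · intro u hu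
        rcases Finset.mem_union.1 (support_add hu) with h | h
        · exact hqxs u h
        · exact hqys u h
      · intro u hu
        rcases Finset.mem_union.1 (support_add hu) with h | h
        · exact hrxs u h
        · exact hrys u h
    | smul a x hx ihx =>
      obtain ⟨qx, rx, hxe, hqx, hqxI, hqxs, hrxs⟩ := ihx
      refine ⟨a • qx, a • rx, by rw [hxe, smul_add], (Scal k).smul_mem hqx a, ?_, ?_, ?_⟩
      · have : (⟨a • qx, _⟩ : ↥(Scal k)) = a • (⟨qx, hqx⟩ : ↥(Scal k)) := rfl
        rw [this]; exact Submodule.smul_of_tower_mem I a hqxI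
      · exact fun u hu => hqxs u (support_smul hu)
      · exact fun u hu => hrxs u (support_smul hu)
  have stepB : ∀ p : B k, p ∈ Scal k →
      ∃ q r : B k, p = q + r ∧ ∃ (hq : q ∈ Scal k), (⟨q, hq⟩ : ↥(Scal k)) ∈ I ∧
        (∀ u ∈ q.support, 0 < Wm w u) ∧ (∀ u ∈ r.support, Wm w u = 0) := by
    intro p hp
    apply stepB0
    have := Algebra.adjoin_eq_span k (G : Set (B k))
    rw [Scal, ← Subalgebra.mem_toSubmodule, this] at hp
    exact hp
  -- L0
  have L0 : ∀ p : B k, p ∈ Scal k → ∀ u ∈ p.support, 0 ≤ Wm w u := by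
    intro p hp u hu
    obtain ⟨q, r, rfl, hq, _, hqs, hrs⟩ := stepB p hp
    rcases Finset.mem_union.1 (support_add hu) with h | h
    · exact le_of_lt (hqs u h)
    · exact le_of_eq (hrs u h).symm
  -- Step C
  have stepC : ∀ x : ↥(Scal k), x ∈ I → ∀ u ∈ (x : B k).support, 0 < Wm w u := by
    intro x hx
    rw [hI, pIdeal] at hx
    induction hx using Submodule.span_induction with
    | mem g hg =>
      rcases hg with hg | ⟨i, ⟨hi1, hle⟩, rfl⟩
      · subst hg
        obtain ⟨u, hu, hWu⟩ := MW_sig (k := k) (w := w)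
        intro v hv
        have : (σS k : B k) = monomial u 1 := hu
        rw [this, support_monomial, if_neg one_ne_zero] at hv
        simp only [Finset.mem_singleton] at hv
        subst hv; omega
      · obtain ⟨u, hu, hWu⟩ := MW_alpha (k := k) (w := w) hi1
        intro v hv
        have h8 : i ≤ 8 := by omega
        have : (αS k i : B k) = monomial u 1 := by
          show alpha k (idx i) = _
          rw [idx_eq hi1 h8, hu]
        rw [this, support_monomial, if_neg one_ne_zero] at hv
        simp only [Finset.mem_singleton] at hv
        subst hv
        have := hk i hi1 hle
        omega
    | zero => intro u hu; simp at hu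
    | add x y hx hy ihx ihy =>
      intro u hu
      have : ((x + y : ↥(Scal k)) : B k) = (x : B k) + y := rfl
      rw [this] at hu
      rcases Finset.mem_union.1 (support_add hu) with h | h
      · exact ihx u h
      · exact ihy u h
    | smul a x hx ihx =>
      intro u hu
      have : ((a • x : ↥(Scal k)) : B k) = (a : B k) * x := rfl
      rw [this] at hu
      obtain ⟨b, hb, c, hc, rfl⟩ := Finset.mem_add.1 (support_mul _ _ hu)
      have h1 : 0 ≤ Wm w b := L0 _ a.2 b hb
      have h2 : 0 < Wm w c := ihx c hc
      rw [Wm_add]; omega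
  constructor
  · -- I ≠ ⊤
    intro h
    have h1 : (1 : ↥(Scal k)) ∈ I := by rw [h]; trivial
    have := stepC 1 h1 0 (by
      have : ((1 : ↥(Scal k)) : B k) = monomial 0 1 := by simp
      rw [this, support_monomial, if_neg one_ne_zero]
      simp)
    rw [Wm_zero] at this
    exact lt_irrefl 0 this
  · -- mul
    intro x y hxy
    by_contra hcon
    push_neg at hcon
    obtain ⟨hx, hy⟩ := hcon
    obtain ⟨qx, rx, hxe, hqx, hqxI, hqxs, hrxs⟩ := stepB (x : B k) x.2
    obtain ⟨qy, ry, hye, hqy, hqyI, hqys, hrys⟩ := stepB (y : B k) y.2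
    have hrx : rx ≠ 0 := by
      intro h0
      apply hx
      have : x = ⟨qx, hqx⟩ := Subtype.ext (by rw [hxe, h0, add_zero])
      rw [this]; exact hqxI
    have hry : ry ≠ 0 := by
      intro h0
      apply hy
      have : y = ⟨qy, hqy⟩ := Subtype.ext (by rw [hye, h0, add_zero])
      rw [this]; exact hqyI
    have hrr : rx * ry ≠ 0 := mul_ne_zero hrx hry
    obtain ⟨u, hu⟩ := (MvPolynomial.support_nonempty.2 hrr)
    have hWu : Wm w u = 0 := by
      obtain ⟨b, hb, c, hc, rfl⟩ := Finset.mem_add.1 (support_mul _ _ hu)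
      rw [Wm_add, hrxs b hb, hrys c hc]; ring
    -- coefficient of u in x*y equals coefficient in rx*ry
    have hnotq : ∀ p q : B k, (∀ v ∈ p.support, 0 < Wm w v) → (∀ v ∈ q.support, 0 ≤ Wm w v) →
        coeff u (p * q) = 0 := by
      intro p q hp hq
      by_contra h0
      obtain ⟨b, hb, c, hc, hbc⟩ := Finset.mem_add.1 (support_mul _ _ (mem_support_iff.2 h0))
      have h1 := hp b hb
      have h2 := hq c hc
      have h3 : 0 < Wm w (b + c) := by rw [Wm_add]; omega
      rw [hbc, hWu] at h3
      omega
    have hq0 : ∀ v ∈ qy.support, 0 ≤ Wm w v := fun v hv => le_of_lt (hqys v hv)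
    have hr0 : ∀ v ∈ ry.support, 0 ≤ Wm w v := fun v hv => le_of_eq (hrys v hv).symm
    have hcoeff : coeff u ((x : B k) * (y : B k)) = coeff u (rx * ry) := by
      rw [hxe, hye]
      have e1 : (qx + rx) * (qy + ry) = qx * (qy + ry) + (qy * rx + rx * ry) := by ring
      rw [e1, coeff_add, coeff_add]
      rw [hnotq qx (qy + ry) hqxs (fun v hv => by
        rcases Finset.mem_union.1 (support_add hv) with h | h
        · exact hq0 v h
        · exact hr0 v h)]
      rw [hnotq qy rx hqys (fun v hv => le_of_eq (hrxs v hv).symm)]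
      ring
    have hcoe : ((x * y : ↥(Scal k)) : B k) = (x : B k) * (y : B k) := rfl
    have hu' : u ∈ ((x * y : ↥(Scal k)) : B k).support := by
      rw [mem_support_iff, hcoe, hcoeff]
      exact mem_support_iff.1 hu
    have := stepC (x * y) hxy u hu'
    rw [hWu] at this
    exact lt_irrefl 0 this

def w1 : Fin 3 × Fin 4 → ℤ := fun p => !![14,-1,12,-3; -2,-3,-3,-3; -3,-3,0,-3] p.1 p.2
def w2 : Fin 3 × Fin 4 → ℤ := fun p => !![5,0,4,-1; -1,-1,-1,-1; -1,-1,0,-1] p.1 p.2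
def w3 : Fin 3 × Fin 4 → ℤ := fun p => !![2,1,-1,-1; -1,0,1,0; -1,1,1,1] p.1 p.2
def w4 : Fin 3 × Fin 4 → ℤ := fun p => !![1,-1,-1,-1; -1,1,1,1; 0,1,1,0] p.1 p.2
def w5 : Fin 3 × Fin 4 → ℤ := fun _ => 1

variable (k)

/-- For each `j ∈ {1,…,5}`, the ideal `𝔭_j = (σ, ᾱ₁, …, ᾱ_{3+j})` of `S` is prime. -/
theorem stmt2 : ∀ j ∈ Finset.Icc 1 5, (pIdeal k j).IsPrime := by
  intro j hj
  rw [Finset.mem_Icc] at hj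
  obtain ⟨h1, h5⟩ := hj
  interval_cases j
  · exact main k 1 (by norm_num) (by norm_num) w1 (by decide)
      (fun i hi1 hi2 => by interval_cases i <;> decide)
      (fun i hi1 hi2 => by interval_cases i <;> decide)
  · exact main k 2 (by norm_num) (by norm_num) w2 (by decide)
      (fun i hi1 hi2 => by interval_cases i <;> decide)
      (fun i hi1 hi2 => by interval_cases i <;> decide)
  · exact main k 3 (by norm_num) (by norm_num) w3 (by decide)
      (fun i hi1 hi2 => by interval_cases i <;> decide)
      (fun i hi1 hi2 => by interval_cases i <;> decide)
  · exact main k 4 (by norm_num) (by norm_num) w4 (by decide)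
      (fun i hi1 hi2 => by interval_cases i <;> decide)
      (fun i hi1 hi2 => by interval_cases i <;> decide)
  · exact main k 5 (by norm_num) (by norm_num) w5 (by decide)
      (fun i hi1 hi2 => by interval_cases i <;> decide)
      (fun i hi1 hi2 => by interval_cases i <;> decide)


end
end

section
/- The subring R = k + x·k[x,y] of the polynomial ring S = k[x,y] (consisting of all polynomials whose constant-term-in-x part is a constant, i.e., all f ∈ k[x,y] with f(0,y) ∈ k) is not a noetherian ring. -/
set_option synthInstance.maxHeartbeats 1000000
set_option maxHeartbeats 1000000

open MvPolynomial

noncomputable section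

variable (k : Type*) [Field k]

/-- The polynomial ring `S = k[x, y]`; `x` is `X 0` and `y` is `X 1`. -/
abbrev T := MvPolynomial (Fin 2) k

/-- The subring `R = k + x·k[x,y]` of `S = k[x,y]`, consisting of all polynomials of the
form `c + x·g` with `c ∈ k` and `g ∈ S`. -/
def Rxy : Subalgebra k (T k) where
  carrier := {f | ∃ c : k, ∃ g : T k, f = C c + X 0 * g}
  add_mem' := by
    rintro a b ⟨c₁, g₁, rfl⟩ ⟨c₂, g₂, rfl⟩
    exact ⟨c₁ + c₂, g₁ + g₂, by rw [map_add]; ring⟩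
  mul_mem' := by
    rintro a b ⟨c₁, g₁, rfl⟩ ⟨c₂, g₂, rfl⟩
    exact ⟨c₁ * c₂, C c₁ * g₂ + C c₂ * g₁ + X 0 * (g₁ * g₂), by rw [map_mul]; ring⟩
  algebraMap_mem' := fun c => ⟨c, 0, by rw [algebraMap_eq]; ring⟩

/-- Evaluation `x ↦ 0`, `y ↦ X`, from `k[x,y]` to `k[y]`. -/
def ev : T k →ₐ[k] Polynomial k := aeval ![0, Polynomial.X]

lemma ev_of_mem {f : T k} (hf : f ∈ Rxy k) : ∃ c : k, ev k f = Polynomial.C c := by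
  obtain ⟨c, g, rfl⟩ := hf
  refine ⟨c, ?_⟩
  simp [ev, algebraMap_eq]

/-- The subring `R = k + x·k[x,y]` of the polynomial ring `S = k[x,y]` is not noetherian. -/
theorem stmt11 : ¬ IsNoetherianRing ↥(Rxy k) := by
  intro h
  -- the ideal of elements of `R` with zero "constant term"
  set φ : Rxy k →+* Polynomial k := (ev k).toRingHom.comp (Rxy k).val.toRingHom with hφ
  set I : Ideal (Rxy k) := RingHom.ker φ with hI
  obtain ⟨s, hs⟩ := (IsNoetherian.noetherian I : I.FG)
  -- each generator is divisible by `X 0`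
  have hgen : ∀ f : Rxy k, f ∈ s → ∃ g : T k, (f : T k) = X 0 * g := by
    intro f hfs
    have hfI : f ∈ I := hs ▸ Ideal.subset_span hfs
    obtain ⟨c, g, hcg⟩ := f.2
    have hev : ev k (f : T k) = 0 := hfI
    rw [hcg] at hev
    simp [ev, algebraMap_eq] at hev
    exact ⟨g, by rw [hcg, hev, map_zero, zero_add]⟩
  classical
  choose! G hG using hgen
  set V : Submodule k (Polynomial k) :=
    Submodule.span k ((fun f => ev k (G f)) '' (s : Set (Rxy k))) with hV
  have hVfin : Module.Finite k V := by
    apply Module.Finite.span_of_finite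
    exact (s.finite_toSet.image _)
  have hX0 : (X 0 : T k) ≠ 0 := X_ne_zero 0
  have hpow : ∀ n : ℕ, (Polynomial.X : Polynomial k) ^ n ∈ V := by
    intro n
    have hmem : (⟨X 0 * X 1 ^ n, 0, X 1 ^ n, by rw [map_zero, zero_add]⟩ : Rxy k) ∈ I := by
      show φ _ = 0
      simp [hφ, ev, algebraMap_eq]
    rw [← hs, Submodule.mem_span_finset] at hmem
    obtain ⟨r, -, hr⟩ := hmem
    -- push to `T k`
    have hr' : (X 0 : T k) * X 1 ^ n = ∑ f ∈ s, (r f : T k) * (X 0 * G f) := by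
      have h2 := congrArg (Subtype.val) hr
      rw [AddSubmonoidClass.coe_finset_sum] at h2
      have h3 : (X 0 : T k) * X 1 ^ n = ∑ i ∈ s, ((r i • i : Rxy k) : T k) := h2.symm
      rw [h3]
      apply Finset.sum_congr rfl
      intro f hf
      show (r f : T k) * (f : T k) = _
      rw [← hG f hf]
    have hcancel : (X 1 : T k) ^ n = ∑ f ∈ s, (r f : T k) * G f := by
      apply mul_left_cancel₀ hX0
      rw [hr', Finset.mul_sum]
      apply Finset.sum_congr rfl
      intro f _; ring
    have := congrArg (ev k) hcancel
    rw [map_pow, map_sum] at this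
    have hevX1 : ev k (X 1 : T k) = Polynomial.X := by simp [ev]
    rw [hevX1] at this
    rw [this]
    apply Submodule.sum_mem
    intro f hf
    rw [map_mul]
    obtain ⟨c, hc⟩ := ev_of_mem k (r f).2
    rw [hc, ← Polynomial.smul_eq_C_mul]
    exact Submodule.smul_mem _ _ (Submodule.subset_span ⟨f, hf, rfl⟩)
  -- `V = ⊤` since it contains all monomials, contradicting finite-dimensionality
  have htop : V = ⊤ := by
    rw [eq_top_iff, ← (Polynomial.basisMonomials k).span_eq]
    apply Submodule.span_le.mpr
    rintro _ ⟨n, rfl⟩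
    rw [Polynomial.coe_basisMonomials]
    show Polynomial.monomial n 1 ∈ V
    rw [← Polynomial.X_pow_eq_monomial]
    exact hpow n
  exact Polynomial.not_finite (Module.Finite.equiv (LinearEquiv.ofTop V htop))

end
end

section
/- Let 𝔫 be a maximal ideal of S = k[x,y] and set 𝔭 = 𝔫 ∩ R where R = k + xS. If x ∉ 𝔫, then the localizations R_𝔭 and S_𝔫 coincide (as subrings of the fraction field k(x,y)); if x ∈ 𝔫, then R_𝔭 is not a noetherian ring. In particular, the noetherian locus U_{S/R} = {𝔫 ∈ Max S : R_{𝔫∩R} = S_𝔫} equals {𝔫 ∈ Max S : x ∉ 𝔫} and is nonempty. -/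
set_option linter.unusedSectionVars false
set_option synthInstance.maxHeartbeats 1000000
set_option maxHeartbeats 1000000


open MvPolynomial

noncomputable section

variable (k : Type*) [Field k]
variable [IsAlgClosed k]

/-- The localization `S_𝔫`, as a subset of the fraction field of `S = k[x,y]`. -/
def locT (n : Ideal (T k)) : Set (FractionRing (T k)) :=
  {x | ∃ a b : T k, b ∉ n ∧
    x * algebraMap (T k) (FractionRing (T k)) b = algebraMap (T k) (FractionRing (T k)) a}

/-- The localization `R_{𝔫 ∩ R}`, as a subset of the fraction field of `S = k[x,y]`. -/
def locRxy (n : Ideal (T k)) : Set (FractionRing (T k)) :=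
  {x | ∃ a b : T k, a ∈ Rxy k ∧ b ∈ Rxy k ∧ b ∉ n ∧
    x * algebraMap (T k) (FractionRing (T k)) b = algebraMap (T k) (FractionRing (T k)) a}

set_option synthInstance.maxHeartbeats 1000000 in
/-- The localization `R_{𝔫 ∩ R}` at a prime ideal `𝔫` of `S`, as a subring of the fraction
field of `S = k[x,y]`. -/
def locRxySubring (n : Ideal (T k)) (hn : n.IsPrime) : Subring (FractionRing (T k)) where
  carrier := locRxy k n
  zero_mem' := ⟨0, 1, (Rxy k).zero_mem, (Rxy k).one_mem, fun h => hn.ne_top (n.eq_top_of_isUnit_mem h isUnit_one), by simp⟩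
  one_mem' := ⟨1, 1, (Rxy k).one_mem, (Rxy k).one_mem, fun h => hn.ne_top (n.eq_top_of_isUnit_mem h isUnit_one), by simp⟩
  add_mem' := by
    rintro x y ⟨a₁, b₁, ha₁, hb₁, hb₁n, he₁⟩ ⟨a₂, b₂, ha₂, hb₂, hb₂n, he₂⟩
    refine ⟨a₁ * b₂ + a₂ * b₁, b₁ * b₂, ?_, ?_, ?_, ?_⟩
    · exact add_mem (mul_mem ha₁ hb₂) (mul_mem ha₂ hb₁)
    · exact mul_mem hb₁ hb₂
    · exact fun h => ((hn.mem_or_mem h).elim hb₁n hb₂n)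
    · rw [map_add, map_mul, map_mul, map_mul]
      calc (x + y) * (algebraMap (T k) (FractionRing (T k)) b₁ * algebraMap (T k) (FractionRing (T k)) b₂)
          = x * algebraMap (T k) (FractionRing (T k)) b₁ * algebraMap (T k) (FractionRing (T k)) b₂
            + y * algebraMap (T k) (FractionRing (T k)) b₂ * algebraMap (T k) (FractionRing (T k)) b₁ := by ring
        _ = _ := by rw [he₁, he₂]
  mul_mem' := by
    rintro x y ⟨a₁, b₁, ha₁, hb₁, hb₁n, he₁⟩ ⟨a₂, b₂, ha₂, hb₂, hb₂n, he₂⟩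
    refine ⟨a₁ * a₂, b₁ * b₂, mul_mem ha₁ ha₂, mul_mem hb₁ hb₂,
      fun h => ((hn.mem_or_mem h).elim hb₁n hb₂n), ?_⟩
    rw [map_mul, map_mul]
    calc x * y * (algebraMap (T k) (FractionRing (T k)) b₁ * algebraMap (T k) (FractionRing (T k)) b₂)
        = (x * algebraMap (T k) (FractionRing (T k)) b₁) * (y * algebraMap (T k) (FractionRing (T k)) b₂) := by ring
      _ = _ := by rw [he₁, he₂]
  neg_mem' := by
    rintro x ⟨a, b, ha, hb, hbn, he⟩
    exact ⟨-a, b, neg_mem ha, hb, hbn, by rw [map_neg, neg_mul, he]⟩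

/-- Injectivity of the map into the fraction field. -/
lemma injFrac : Function.Injective (algebraMap (T k) (FractionRing (T k))) :=
  IsFractionRing.injective _ _

/-- The evaluation `x ↦ 0`, `y ↦ Y`. -/
def psiY : T k →ₐ[k] Polynomial k := aeval ![0, Polynomial.X]

lemma psiY_R (c : k) (g : T k) : psiY k (C c + X 0 * g) = Polynomial.C c := by
  simp [psiY, algebraMap_eq]

lemma psiY_X1 : psiY k (X 1) = Polynomial.X := by
  simp [psiY]

lemma const_ne_zero (n : Ideal (T k)) (hx : X 0 ∈ n) {b : T k} {β : k} {g : T k}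
    (hbe : b = C β + X 0 * g) (hbn : b ∉ n) : β ≠ 0 := by
  rintro rfl
  exact hbn (by rw [hbe, map_zero, zero_add]; exact Ideal.mul_mem_right _ _ hx)

lemma mem_locRxy_of_mem (n : Ideal (T k)) (hn : n.IsPrime) {a : T k} (ha : a ∈ Rxy k) :
    algebraMap (T k) (FractionRing (T k)) a ∈ locRxy k n :=
  ⟨a, 1, ha, (Rxy k).one_mem,
    fun h => hn.ne_top (n.eq_top_of_isUnit_mem h isUnit_one), by simp⟩

lemma xypow_mem (i : ℕ) : X 0 * X 1 ^ i ∈ Rxy k :=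
  ⟨0, X 1 ^ i, by rw [map_zero, zero_add]⟩

/-- The element `x·yⁱ/1` of the localization `R_{𝔫∩R}`. -/
def gen (n : Ideal (T k)) (hn : n.IsPrime) (i : ℕ) : locRxySubring k n hn :=
  ⟨algebraMap (T k) (FractionRing (T k)) (X 0 * X 1 ^ i),
    mem_locRxy_of_mem k n hn (xypow_mem k i)⟩

lemma span_clear (n : Ideal (T k)) (hn : n.IsPrime) (m : ℕ) (z : locRxySubring k n hn)
    (hz : z ∈ Ideal.span (Set.range fun i : Fin m => gen k n hn (i : ℕ))) :
    ∃ (b : T k) (r : Fin m → T k), b ∈ Rxy k ∧ b ∉ n ∧ (∀ i, r i ∈ Rxy k) ∧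
      (z : FractionRing (T k)) * algebraMap (T k) (FractionRing (T k)) b
        = algebraMap (T k) (FractionRing (T k)) (∑ i, r i * (X 0 * X 1 ^ (i : ℕ))) := by
  refine Submodule.span_induction ?_ ?_ ?_ ?_ hz
  · rintro w ⟨i, rfl⟩
    refine ⟨1, fun j => if j = i then 1 else 0, (Rxy k).one_mem,
      fun h => hn.ne_top (n.eq_top_of_isUnit_mem h isUnit_one), ?_, ?_⟩
    · intro j
      by_cases h : j = i <;> simp [h, (Rxy k).one_mem, (Rxy k).zero_mem]
    · rw [map_one, mul_one]
      simp [gen, ite_mul, Finset.sum_ite_eq']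
  · exact ⟨1, 0, (Rxy k).one_mem,
      fun h => hn.ne_top (n.eq_top_of_isUnit_mem h isUnit_one),
      fun i => (Rxy k).zero_mem, by simp⟩
  · rintro u v _ _ ⟨b₁, r₁, hb₁, hb₁n, hr₁, he₁⟩ ⟨b₂, r₂, hb₂, hb₂n, hr₂, he₂⟩
    refine ⟨b₁ * b₂, fun i => r₁ i * b₂ + r₂ i * b₁, mul_mem hb₁ hb₂,
      fun h => (hn.mem_or_mem h).elim hb₁n hb₂n,
      fun i => add_mem (mul_mem (hr₁ i) hb₂) (mul_mem (hr₂ i) hb₁), ?_⟩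
    have hco : ((u + v : locRxySubring k n hn) : FractionRing (T k))
        = (u : FractionRing (T k)) + v := rfl
    rw [hco, map_mul]
    have e : ((u : FractionRing (T k)) + v) *
        (algebraMap (T k) (FractionRing (T k)) b₁ * algebraMap (T k) (FractionRing (T k)) b₂)
        = ((u : FractionRing (T k)) * algebraMap (T k) (FractionRing (T k)) b₁) *
            algebraMap (T k) (FractionRing (T k)) b₂
          + ((v : FractionRing (T k)) * algebraMap (T k) (FractionRing (T k)) b₂) *
            algebraMap (T k) (FractionRing (T k)) b₁ := by ring
    rw [e, he₁, he₂, ← map_mul, ← map_mul, ← map_add]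
    congr 1
    rw [Finset.sum_mul, Finset.sum_mul, ← Finset.sum_add_distrib]
    exact Finset.sum_congr rfl fun i _ => by ring
  · rintro a u _ ⟨b, r, hb, hbn, hr, he⟩
    obtain ⟨aa, ab, haa, hab, habn, hae⟩ := a.2
    refine ⟨ab * b, fun i => aa * r i, mul_mem hab hb,
      fun h => (hn.mem_or_mem h).elim habn hbn,
      fun i => mul_mem haa (hr i), ?_⟩
    rw [smul_eq_mul]
    have hcoe : ((a * u : locRxySubring k n hn) : FractionRing (T k))
        = (a : FractionRing (T k)) * (u : FractionRing (T k)) := rfl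
    rw [hcoe, map_mul]
    have e : (a : FractionRing (T k)) * (u : FractionRing (T k)) *
        (algebraMap (T k) (FractionRing (T k)) ab * algebraMap (T k) (FractionRing (T k)) b)
        = ((a : FractionRing (T k)) * algebraMap (T k) (FractionRing (T k)) ab) *
          ((u : FractionRing (T k)) * algebraMap (T k) (FractionRing (T k)) b) := by ring
    rw [e, hae, he, ← map_mul]
    congr 1
    rw [Finset.mul_sum]
    exact Finset.sum_congr rfl fun i _ => by ring

lemma gen_not_mem (n : Ideal (T k)) (hn : n.IsPrime) (hx : X 0 ∈ n) (m : ℕ) :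
    gen k n hn m ∉ Ideal.span (Set.range fun i : Fin m => gen k n hn (i : ℕ)) := by
  intro hmem
  obtain ⟨b, r, hb, hbn, hr, he⟩ := span_clear k n hn m _ hmem
  rw [show ((gen k n hn m : locRxySubring k n hn) : FractionRing (T k))
      = algebraMap (T k) (FractionRing (T k)) (X 0 * X 1 ^ m) from rfl, ← map_mul] at he
  have he' : X 0 * X 1 ^ m * b = ∑ i : Fin m, r i * (X 0 * X 1 ^ (i : ℕ)) := injFrac k he
  have he'' : X 0 * (X 1 ^ m * b) = X 0 * ∑ i : Fin m, r i * X 1 ^ (i : ℕ) := by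
    rw [Finset.mul_sum, ← mul_assoc, he']
    exact Finset.sum_congr rfl fun i _ => by ring
  have hx0 : (X 0 : T k) ≠ 0 := X_ne_zero 0
  have hcan : X 1 ^ m * b = ∑ i : Fin m, r i * X 1 ^ (i : ℕ) := mul_left_cancel₀ hx0 he''
  obtain ⟨β, g, hbe⟩ := hb
  have hβ : β ≠ 0 := const_ne_zero k n hx hbe hbn
  have hψ := congrArg (psiY k) hcan
  rw [map_mul, map_pow, psiY_X1, hbe, psiY_R, map_sum] at hψ
  have hcoeff := congrArg (fun p => Polynomial.coeff p m) hψ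
  simp only [Polynomial.finset_sum_coeff] at hcoeff
  rw [show Polynomial.X ^ m * Polynomial.C β = Polynomial.C β * Polynomial.X ^ m from
    mul_comm _ _, Polynomial.coeff_C_mul, Polynomial.coeff_X_pow, if_pos rfl, mul_one] at hcoeff
  apply hβ
  rw [hcoeff]
  refine Finset.sum_eq_zero fun i _ => ?_
  obtain ⟨c, gg, hre⟩ := hr i
  rw [hre, map_mul, psiY_R, map_pow, psiY_X1, Polynomial.coeff_C_mul, Polynomial.coeff_X_pow,
    if_neg (by exact fun h => absurd h.symm (Nat.ne_of_lt i.2)), mul_zero]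

lemma not_noeth (n : Ideal (T k)) (hn : n.IsPrime) (hx : X 0 ∈ n) :
    ¬ IsNoetherianRing ↥(locRxySubring k n hn) := by
  intro hN
  have hN' : IsNoetherian (locRxySubring k n hn) (locRxySubring k n hn) :=
    isNoetherianRing_iff.mp hN
  obtain ⟨N, hstab⟩ := monotone_stabilizes_iff_noetherian.mpr hN'
    ⟨fun m => Ideal.span (Set.range fun i : Fin m => gen k n hn (i : ℕ)),
      by
        intro m m' hmm
        refine Ideal.span_mono ?_
        rintro w ⟨i, rfl⟩
        exact ⟨⟨(i : ℕ), lt_of_lt_of_le i.2 hmm⟩, rfl⟩⟩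
  have h1 : gen k n hn N ∈ Ideal.span (Set.range fun i : Fin (N + 1) => gen k n hn (i : ℕ)) :=
    Ideal.subset_span ⟨⟨N, Nat.lt_succ_self N⟩, rfl⟩
  have h2 := hstab (N + 1) (Nat.le_succ N)
  exact gen_not_mem k n hn hx N (by rw [show (Ideal.span (Set.range fun i : Fin N =>
    gen k n hn (i : ℕ))) = _ from h2]; exact h1)

lemma part1 (n : Ideal (T k)) (hn : n.IsMaximal) (hx : X 0 ∉ n) :
    locRxy k n = locT k n := by
  ext z
  constructor
  · rintro ⟨a, b, _, _, hbn, he⟩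
    exact ⟨a, b, hbn, he⟩
  · rintro ⟨a, b, hbn, he⟩
    refine ⟨X 0 * a, X 0 * b, ⟨0, a, by rw [map_zero, zero_add]⟩,
      ⟨0, b, by rw [map_zero, zero_add]⟩,
      fun h => (hn.isPrime.mem_or_mem h).elim hx hbn, ?_⟩
    rw [map_mul, map_mul, ← mul_assoc, mul_comm z, mul_assoc, he]

lemma X1_not_mem_locRxy (n : Ideal (T k)) (hx : X 0 ∈ n) :
    algebraMap (T k) (FractionRing (T k)) (X 1) ∉ locRxy k n := by
  rintro ⟨a, b, ha, hb, hbn, he⟩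
  rw [← map_mul] at he
  have he' : X 1 * b = a := injFrac k he
  obtain ⟨β, g, hbe⟩ := hb
  obtain ⟨α, h, hae⟩ := ha
  have hβ : β ≠ 0 := const_ne_zero k n hx hbe hbn
  have hψ := congrArg (psiY k) he'
  rw [map_mul, psiY_X1, hbe, hae, psiY_R, psiY_R] at hψ
  have hc := congrArg (fun p => Polynomial.coeff p 1) hψ
  simp only [Polynomial.coeff_X_mul, Polynomial.coeff_C] at hc
  exact hβ (by simpa using hc)

/-- Let `𝔫` be a maximal ideal of `S = k[x,y]` and `𝔭 = 𝔫 ∩ R` where `R = k + xS`.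
If `x ∉ 𝔫` then `R_𝔭` and `S_𝔫` coincide as subrings of the fraction field `k(x,y)`;
if `x ∈ 𝔫` then `R_𝔭` is not noetherian. In particular, the noetherian locus
`U_{S/R} = {𝔫 ∈ Max S : R_{𝔫 ∩ R} = S_𝔫}` equals `{𝔫 ∈ Max S : x ∉ 𝔫}` and is nonempty. -/
theorem stmt12 :
    (∀ n : Ideal (T k), n.IsMaximal → X 0 ∉ n → locRxy k n = locT k n) ∧
    (∀ (n : Ideal (T k)) (hn : n.IsMaximal), X 0 ∈ n →
      ¬ IsNoetherianRing ↥(locRxySubring k n hn.isPrime)) ∧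
    ({n : Ideal (T k) | n.IsMaximal ∧ locRxy k n = locT k n} =
      {n : Ideal (T k) | n.IsMaximal ∧ X 0 ∉ n}) ∧
    {n : Ideal (T k) | n.IsMaximal ∧ locRxy k n = locT k n}.Nonempty := by
  have hset : {n : Ideal (T k) | n.IsMaximal ∧ locRxy k n = locT k n} =
      {n : Ideal (T k) | n.IsMaximal ∧ X 0 ∉ n} := by
    ext n
    simp only [Set.mem_setOf_eq]
    constructor
    · rintro ⟨hn, heq⟩
      refine ⟨hn, fun hx => ?_⟩
      have hmem : algebraMap (T k) (FractionRing (T k)) (X 1) ∈ locT k n :=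
        ⟨X 1, 1, fun h => hn.isPrime.ne_top (n.eq_top_of_isUnit_mem h isUnit_one), by simp⟩
      rw [← heq] at hmem
      exact X1_not_mem_locRxy k n hx hmem
    · rintro ⟨hn, hx⟩
      exact ⟨hn, part1 k n hn hx⟩
  refine ⟨part1 k, fun n hn hx => not_noeth k n hn.isPrime hx, hset, ?_⟩
  rw [hset]
  set f : T k →+* k := eval (fun i : Fin 2 => if i = 0 then 1 else 0)
  refine ⟨RingHom.ker f, RingHom.ker_isMaximal_of_surjective f
    (fun a => ⟨C a, eval_C a⟩), fun hx => ?_⟩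
  rw [RingHom.mem_ker] at hx
  simp only [f, eval_X, if_pos rfl] at hx
  exact one_ne_zero hx

end
end

section
/- The contraction map Spec S → Spec R, 𝔮 ↦ 𝔮 ∩ R, is surjective: every prime ideal of R = k + x·k[x,y] is the contraction of a prime ideal of S = k[x,y]. Together with the fact that U_{S/R} ≠ ∅, this shows S is a depiction of R. -/
open MvPolynomial

noncomputable section

variable (k : Type*) [Field k]
variable [IsAlgClosed k]

lemma primeX0 : Prime (X 0 : T k) := by
  rw [← MulEquiv.prime_iff (finSuccEquiv k 1).toMulEquiv]
  simpa [finSuccEquiv_X_zero] using Polynomial.prime_X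

lemma xmem : ∀ t : T k, X 0 * t ∈ Rxy k :=
  fun t => show ∃ c g, X 0 * t = C c + X 0 * g from ⟨0, t, by rw [map_zero, zero_add]⟩

/-- The contraction map `Spec S → Spec R`, `𝔮 ↦ 𝔮 ∩ R`, is surjective: every prime ideal of
`R = k + x·k[x,y]` is the contraction of a prime ideal of `S = k[x,y]`. -/

theorem stmt13 :
    ∀ p : Ideal ↥(Rxy k), p.IsPrime →
      ∃ q : Ideal (T k), q.IsPrime ∧ Ideal.comap ((Rxy k).val : ↥(Rxy k) →ₐ[k] T k) q = p := by
  intro p hp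
  set ξ : ↥(Rxy k) := ⟨X 0, by simpa using xmem k 1⟩ with hξ
  by_cases hx : ξ ∈ p
  · -- p = conductor = comap (span {X 0})
    refine ⟨Ideal.span {X 0}, (Ideal.span_singleton_prime (X_ne_zero 0)).mpr (primeX0 k), ?_⟩
    have hXg : ∀ g : T k, (⟨X 0 * g, xmem k g⟩ : ↥(Rxy k)) ∈ p := by
      intro g
      have hsq : (⟨X 0 * g, xmem k g⟩ : ↥(Rxy k)) * ⟨X 0 * g, xmem k g⟩
          = ξ * ⟨X 0 * (g * g), xmem k _⟩ := by
        apply Subtype.ext; show (X 0 * g) * (X 0 * g) = X 0 * (X 0 * (g * g)); ring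
      have : (⟨X 0 * g, xmem k g⟩ : ↥(Rxy k)) * ⟨X 0 * g, xmem k g⟩ ∈ p := by
        rw [hsq]; exact p.mul_mem_right _ hx
      rcases hp.mem_or_mem this with h | h <;> exact h
    ext r
    obtain ⟨f, hf⟩ := r
    obtain ⟨c, g, rfl⟩ := hf
    simp only [Ideal.mem_comap, Subalgebra.coe_val, Ideal.mem_span_singleton]
    constructor
    · rintro ⟨h, hh⟩
      have hc : c = 0 := by
        have : C c = X 0 * (h - g) := by rw [mul_sub, ← hh]; ring
        have := congrArg (eval (fun _ => (0:k))) this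
        simpa using this
      subst hc
      have : (⟨C 0 + X 0 * g, ⟨0, g, rfl⟩⟩ : ↥(Rxy k)) = ⟨X 0 * g, xmem k g⟩ := by
        apply Subtype.ext; show C 0 + X 0 * g = X 0 * g; rw [map_zero, zero_add]
      rw [this]; exact hXg g
    · intro hr
      have hc : c = 0 := by
        by_contra hc
        have hCc : (⟨C c + X 0 * g, ⟨c, g, rfl⟩⟩ : ↥(Rxy k)) - ⟨X 0 * g, xmem k g⟩
            = algebraMap k ↥(Rxy k) c := by
          apply Subtype.ext
          show (C c + X 0 * g) - X 0 * g = algebraMap k (T k) c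
          rw [algebraMap_eq]; ring
        have hmem : algebraMap k ↥(Rxy k) c ∈ p := by
          rw [← hCc]; exact p.sub_mem hr (hXg g)
        exact hp.ne_top (p.eq_top_of_isUnit_mem hmem
          ((isUnit_iff_ne_zero.mpr hc).map (algebraMap k ↥(Rxy k))))
      subst hc
      exact ⟨g, by rw [map_zero, zero_add]⟩
  · -- x ∉ p : take q = {t | x*t ∈ p}
    have key : ∀ a b : T k, (⟨X 0 * a, xmem k a⟩ : ↥(Rxy k)) * ⟨X 0 * b, xmem k b⟩
        = ξ * ⟨X 0 * (a * b), xmem k _⟩ := by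
      intro a b; apply Subtype.ext
      show (X 0 * a) * (X 0 * b) = X 0 * (X 0 * (a * b)); ring
    refine ⟨{
      carrier := {t | (⟨X 0 * t, xmem k t⟩ : ↥(Rxy k)) ∈ p}
      zero_mem' := by
        have : (⟨X 0 * 0, xmem k 0⟩ : ↥(Rxy k)) = 0 := Subtype.ext (mul_zero _)
        show (⟨X 0 * 0, xmem k 0⟩ : ↥(Rxy k)) ∈ p
        rw [this]; exact p.zero_mem
      add_mem' := by
        intro a b ha hb
        show (⟨X 0 * (a + b), xmem k _⟩ : ↥(Rxy k)) ∈ p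
        have : (⟨X 0 * (a + b), xmem k _⟩ : ↥(Rxy k))
            = ⟨X 0 * a, xmem k a⟩ + ⟨X 0 * b, xmem k b⟩ := Subtype.ext (mul_add _ _ _)
        rw [this]; exact p.add_mem ha hb
      smul_mem' := by
        intro s t ht
        show (⟨X 0 * (s * t), xmem k _⟩ : ↥(Rxy k)) ∈ p
        have h1 : ξ * (⟨X 0 * (s * t), xmem k _⟩ : ↥(Rxy k)) ∈ p := by
          rw [← key]; exact p.mul_mem_left _ ht
        rcases hp.mem_or_mem h1 with h | h
        · exact absurd h hx
        · exact h }, ?_, ?_⟩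
    · constructor
      · intro htop
        have h1 : (1 : T k) ∈ (⊤ : Ideal (T k)) := trivial
        have : (⟨X 0 * 1, xmem k 1⟩ : ↥(Rxy k)) ∈ p := by
          rw [← htop] at h1; exact h1
        have hξ1 : (⟨X 0 * 1, xmem k 1⟩ : ↥(Rxy k)) = ξ := Subtype.ext (mul_one _)
        rw [hξ1] at this; exact hx this
      · intro a b hab
        have hab' : (⟨X 0 * (a * b), xmem k _⟩ : ↥(Rxy k)) ∈ p := hab
        have h1 : (⟨X 0 * a, xmem k a⟩ : ↥(Rxy k)) * ⟨X 0 * b, xmem k b⟩ ∈ p := by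
          rw [key]; exact p.mul_mem_left _ hab'
        exact hp.mem_or_mem h1
    · ext r
      obtain ⟨f, hf⟩ := r
      simp only [Ideal.mem_comap, Subalgebra.coe_val]
      show (⟨X 0 * f, xmem k f⟩ : ↥(Rxy k)) ∈ p ↔ _
      have hmul : (⟨X 0 * f, xmem k f⟩ : ↥(Rxy k)) = ξ * ⟨f, hf⟩ := Subtype.ext rfl
      rw [hmul]
      constructor
      · intro h
        rcases hp.mem_or_mem h with h | h
        · exact absurd h hx
        · exact h
      · exact fun h => p.mul_mem_left _ h

end
end
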